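/- The function γ : ℝ × [0,∞) → ℝ defined by γ(z, s) = √s·φ(z/√s) + z·Φ(z/√s) for s > 0 and γ(z, 0) = max(z, 0) is continuous on ℝ × [0,∞), satisfies γ(z, s) > 0 whenever s > 0, and is non-decreasing in each of its two arguments. -/

import Mathlib

open MeasureTheory ProbabilityTheory

noncomputable def stdGaussCdf' (t : ℝ) : ℝ := (gaussianReal 0 1 (Set.Iic t)).toReal

noncomputable def stdGaussPdf' (t : ℝ) : ℝ :=
  (Real.sqrt (2 * Real.pi))⁻¹ * Real.exp (-t ^ 2 / 2)

/-- The expected-improvement function `γ(z,s)`. -/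
noncomputable def eiGamma (z s : ℝ) : ℝ :=
  if s = 0 then max z 0
  else Real.sqrt s * stdGaussPdf' (z / Real.sqrt s) + z * stdGaussCdf' (z / Real.sqrt s)

section Aux
open Real Set

lemma pdf_eq : gaussianPDFReal 0 1 = stdGaussPdf' := by
  ext x
  simp [gaussianPDFReal, stdGaussPdf']

lemma pdf_pos (t : ℝ) : 0 < stdGaussPdf' t := by
  rw [← pdf_eq]; exact gaussianPDFReal_pos 0 1 t one_ne_zero

lemma pdf_integrable : Integrable stdGaussPdf' := by
  rw [← pdf_eq]; exact integrable_gaussianPDFReal 0 1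

lemma pdf_continuous : Continuous stdGaussPdf' := by
  unfold stdGaussPdf'
  fun_prop

lemma cdf_eq (t : ℝ) : stdGaussCdf' t = ∫ x in Iic t, stdGaussPdf' x := by
  rw [stdGaussCdf', gaussianReal_apply_eq_integral 0 one_ne_zero, pdf_eq,
    ENNReal.toReal_ofReal]
  exact setIntegral_nonneg measurableSet_Iic fun x _ => (pdf_pos x).le

lemma cdf_hasDeriv (t : ℝ) : HasDerivAt stdGaussCdf' (stdGaussPdf' t) t := by
  have h : ∀ u : ℝ, stdGaussCdf' u = stdGaussCdf' 0 + ∫ x in (0:ℝ)..u, stdGaussPdf' x := by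
    intro u
    rw [cdf_eq, cdf_eq, ← intervalIntegral.integral_Iic_sub_Iic pdf_integrable.integrableOn
      pdf_integrable.integrableOn]
    ring
  have : HasDerivAt (fun u => stdGaussCdf' 0 + ∫ x in (0:ℝ)..u, stdGaussPdf' x)
      (stdGaussPdf' t) t := by
    refine HasDerivAt.const_add _ ?_
    exact intervalIntegral.integral_hasDerivAt_right
      (pdf_integrable.intervalIntegrable)
      (pdf_continuous.stronglyMeasurableAtFilter _ _)
      pdf_continuous.continuousAt
  exact this.congr_of_eventuallyEq (Filter.Eventually.of_forall fun u => h u)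

lemma cdf_continuous : Continuous stdGaussCdf' :=
  continuous_iff_continuousAt.2 fun t => (cdf_hasDeriv t).continuousAt

lemma cdf_nonneg (t : ℝ) : 0 ≤ stdGaussCdf' t := ENNReal.toReal_nonneg

lemma cdf_pos (t : ℝ) : 0 < stdGaussCdf' t := by
  rw [cdf_eq]
  have : IntegrableOn stdGaussPdf' (Iic t) := pdf_integrable.integrableOn
  refine setIntegral_pos_iff_support_of_nonneg_ae ?_ this |>.2 ?_
  · exact Filter.Eventually.of_forall fun x => (pdf_pos x).le
  · have : (Function.support stdGaussPdf') ∩ Iic t = Iic t := by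
      rw [inter_eq_right]
      intro x _
      exact (pdf_pos x).ne'
    rw [this]
    simp [Real.volume_Iic]

lemma exp_sq_tendsto_bot : Filter.Tendsto (fun x : ℝ => -Real.exp (-x^2/2)) Filter.atBot (nhds 0) := by
  have h1 : Filter.Tendsto (fun x : ℝ => x^2) Filter.atBot Filter.atTop := by
    have := (Filter.tendsto_pow_atTop (α := ℝ) (n := 2) two_ne_zero).comp (Filter.tendsto_abs_atBot_atTop (G := ℝ))
    refine this.congr fun x => ?_
    simp [Function.comp, sq_abs]
  have h2 : Filter.Tendsto (fun x : ℝ => -x^2/2) Filter.atBot Filter.atBot := by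
    apply Filter.Tendsto.atBot_div_const two_pos
    exact Filter.tendsto_neg_atBot_iff.mpr h1
  have := (Real.tendsto_exp_atBot).comp h2
  simpa using this.neg

lemma exp_sq_tendsto_top : Filter.Tendsto (fun x : ℝ => -Real.exp (-x^2/2)) Filter.atTop (nhds 0) := by
  have h1 : Filter.Tendsto (fun x : ℝ => x^2) Filter.atTop Filter.atTop :=
    Filter.tendsto_pow_atTop two_ne_zero
  have h2 : Filter.Tendsto (fun x : ℝ => -x^2/2) Filter.atTop Filter.atBot := by
    apply Filter.Tendsto.atBot_div_const two_pos
    exact Filter.tendsto_neg_atBot_iff.mpr h1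
  have := (Real.tendsto_exp_atBot).comp h2
  simpa using this.neg

lemma hasDeriv_negexp (x : ℝ) : HasDerivAt (fun x : ℝ => -Real.exp (-x^2/2))
    (x * Real.exp (-x^2/2)) x := by
  have h : HasDerivAt (fun x : ℝ => -x^2/2) (-x) x := by
    have := ((hasDerivAt_pow 2 x).neg).div_const 2
    simpa using this.congr_deriv (by ring)
  have := (h.exp).neg
  exact this.congr_deriv (by ring)

lemma integrable_xexp : Integrable (fun x : ℝ => x * Real.exp (-x^2/2)) := by
  have h := integrable_mul_exp_neg_mul_sq (b := (1:ℝ)/2) (by norm_num)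
  refine h.congr (Filter.Eventually.of_forall fun x => ?_)
  ring_nf

lemma integrable_exp_sq : Integrable (fun x : ℝ => Real.exp (-x^2/2)) := by
  have := pdf_integrable.const_mul (Real.sqrt (2 * Real.pi))
  refine this.congr ?_
  refine Filter.Eventually.of_forall fun x => ?_
  have h : Real.sqrt (2 * Real.pi) ≠ 0 := by positivity
  simp only [stdGaussPdf']
  field_simp

lemma tail_int_Iic (a : ℝ) : ∫ x in Iic a, x * Real.exp (-x^2/2) = -Real.exp (-a^2/2) := by
  have := MeasureTheory.integral_Iic_of_hasDerivAt_of_tendsto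
    (f := fun x : ℝ => -Real.exp (-x^2/2)) (f' := fun x : ℝ => x * Real.exp (-x^2/2))
    (a := a) (m := 0)
    ((hasDeriv_negexp a).continuousAt.continuousWithinAt)
    (fun x _ => hasDeriv_negexp x) integrable_xexp.integrableOn exp_sq_tendsto_bot
  simpa using this

lemma tail_int_Ioi (a : ℝ) : ∫ x in Ioi a, x * Real.exp (-x^2/2) = Real.exp (-a^2/2) := by
  have := MeasureTheory.integral_Ioi_of_hasDerivAt_of_tendsto
    (f := fun x : ℝ => -Real.exp (-x^2/2)) (f' := fun x : ℝ => x * Real.exp (-x^2/2))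
    (a := a) (m := 0)
    ((hasDeriv_negexp a).continuousAt.continuousWithinAt)
    (fun x _ => hasDeriv_negexp x) integrable_xexp.integrableOn exp_sq_tendsto_top
  simpa using this

lemma cdf_eq' (t : ℝ) :
    stdGaussCdf' t = (Real.sqrt (2 * Real.pi))⁻¹ * ∫ x in Iic t, Real.exp (-x^2/2) := by
  rw [cdf_eq, ← MeasureTheory.integral_const_mul]
  rfl

lemma int_pdf_one : ∫ x, stdGaussPdf' x = 1 := by
  rw [← pdf_eq]; exact integral_gaussianPDFReal_eq_one 0 one_ne_zero

lemma cdf_add_tail (t : ℝ) : stdGaussCdf' t + ∫ x in Ioi t, stdGaussPdf' x = 1 := by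
  rw [cdf_eq, ← int_pdf_one]
  exact intervalIntegral.integral_Iic_add_Ioi pdf_integrable.integrableOn
    pdf_integrable.integrableOn

lemma tail_pos (t : ℝ) : 0 < ∫ x in Ioi t, stdGaussPdf' x := by
  refine setIntegral_pos_iff_support_of_nonneg_ae ?_ pdf_integrable.integrableOn |>.2 ?_
  · exact Filter.Eventually.of_forall fun x => (pdf_pos x).le
  · have : (Function.support stdGaussPdf') ∩ Ioi t = Ioi t := by
      rw [inter_eq_right]; exact fun x _ => (pdf_pos x).ne'
    rw [this]
    simp [Real.volume_Ioi]

lemma cdf_lt_one (t : ℝ) : stdGaussCdf' t < 1 := by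
  have h := cdf_add_tail t
  have := tail_pos t
  linarith

lemma mills_neg {u : ℝ} (hu : u ≤ 0) : -u * stdGaussCdf' u ≤ stdGaussPdf' u := by
  rcases eq_or_lt_of_le hu with rfl | hu'
  · simpa using (pdf_pos 0).le
  have hc : (0:ℝ) < (Real.sqrt (2 * Real.pi))⁻¹ := by positivity
  rw [cdf_eq', stdGaussPdf']
  rw [show -u * ((Real.sqrt (2 * Real.pi))⁻¹ * ∫ x in Iic u, Real.exp (-x^2/2))
    = (Real.sqrt (2 * Real.pi))⁻¹ * ∫ x in Iic u, -u * Real.exp (-x^2/2) by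
      rw [MeasureTheory.integral_const_mul]; ring]
  refine mul_le_mul_of_nonneg_left ?_ hc.le
  have key : ∫ x in Iic u, -u * Real.exp (-x^2/2) ≤ ∫ x in Iic u, -x * Real.exp (-x^2/2) := by
    refine setIntegral_mono_on ((integrable_exp_sq.const_mul (-u)).integrableOn)
      ((integrable_xexp.neg.congr (Filter.Eventually.of_forall fun x => by simp [neg_mul])).integrableOn) measurableSet_Iic ?_
    intro x hx
    have : x ≤ u := hx
    nlinarith [Real.exp_pos (-x^2/2)]
  have : ∫ x in Iic u, -x * Real.exp (-x^2/2) = Real.exp (-u^2/2) := by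
    have h := tail_int_Iic u
    have : ∫ x in Iic u, -x * Real.exp (-x^2/2) = -∫ x in Iic u, x * Real.exp (-x^2/2) := by
      rw [← MeasureTheory.integral_neg]
      refine setIntegral_congr_fun measurableSet_Iic fun x _ => by ring
    rw [this, h, neg_neg]
  linarith [key, this.le, this.ge]

lemma mills_pos {u : ℝ} (hu : 0 ≤ u) : u * (1 - stdGaussCdf' u) ≤ stdGaussPdf' u := by
  rcases eq_or_lt_of_le hu with rfl | hu'
  · simpa using (pdf_pos 0).le
  have hc : (0:ℝ) < (Real.sqrt (2 * Real.pi))⁻¹ := by positivity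
  have htail : 1 - stdGaussCdf' u = ∫ x in Ioi u, stdGaussPdf' x := by
    have := cdf_add_tail u; linarith
  rw [htail, stdGaussPdf']
  have hrw : ∫ x in Ioi u, stdGaussPdf' x
      = (Real.sqrt (2 * Real.pi))⁻¹ * ∫ x in Ioi u, Real.exp (-x^2/2) := by
    rw [← MeasureTheory.integral_const_mul]; rfl
  rw [hrw, show u * ((Real.sqrt (2 * Real.pi))⁻¹ * ∫ x in Ioi u, Real.exp (-x^2/2))
    = (Real.sqrt (2 * Real.pi))⁻¹ * ∫ x in Ioi u, u * Real.exp (-x^2/2) by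
      rw [MeasureTheory.integral_const_mul]; ring]
  refine mul_le_mul_of_nonneg_left ?_ hc.le
  have key : ∫ x in Ioi u, u * Real.exp (-x^2/2) ≤ ∫ x in Ioi u, x * Real.exp (-x^2/2) := by
    refine setIntegral_mono_on ((integrable_exp_sq.const_mul u).integrableOn)
      (integrable_xexp.integrableOn) measurableSet_Ioi ?_
    intro x hx
    have : u ≤ x := le_of_lt hx
    nlinarith [Real.exp_pos (-x^2/2)]
  rw [tail_int_Ioi u] at key
  exact key

/-- `g u = φ(u) + u Φ(u)` -/
noncomputable def eiG (u : ℝ) : ℝ := stdGaussPdf' u + u * stdGaussCdf' u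

lemma pdf_hasDeriv (u : ℝ) : HasDerivAt stdGaussPdf' (-u * stdGaussPdf' u) u := by
  have h1 : HasDerivAt (fun x : ℝ => -x^2/2) (-u) u := by
    have := ((hasDerivAt_pow 2 u).neg).div_const 2
    simpa using this.congr_deriv (by ring)
  have := (h1.exp).const_mul (Real.sqrt (2 * Real.pi))⁻¹
  exact this.congr_deriv (by simp only [stdGaussPdf']; ring)

lemma g_hasDeriv (u : ℝ) : HasDerivAt eiG (stdGaussCdf' u) u := by
  have h1 := (pdf_hasDeriv u).add ((hasDerivAt_id u).mul (cdf_hasDeriv u))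
  exact h1.congr_deriv (by simp only [id]; ring)

lemma g_continuous : Continuous eiG :=
  continuous_iff_continuousAt.2 fun u => (g_hasDeriv u).continuousAt

lemma g_strictMono : StrictMono eiG := by
  have hd : ∀ x, deriv eiG x = stdGaussCdf' x := fun x => (g_hasDeriv x).deriv
  exact strictMono_of_deriv_pos fun x => by rw [hd]; exact cdf_pos x

lemma g_monotone : Monotone eiG := g_strictMono.monotone

lemma k_strictAnti : StrictAnti (fun u => eiG u - u) := by
  have hd : ∀ x, deriv (fun u => eiG u - u) x = stdGaussCdf' x - 1 := by
    intro x
    exact ((g_hasDeriv x).sub (hasDerivAt_id x)).deriv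
  exact strictAnti_of_deriv_neg fun x => by rw [hd]; linarith [cdf_lt_one x]

lemma g_nonneg_of_nonpos {u : ℝ} (hu : u ≤ 0) : 0 ≤ eiG u := by
  have := mills_neg hu
  simp only [eiG]
  nlinarith

lemma g_pos (u : ℝ) : 0 < eiG u := by
  rcases le_or_gt u 0 with hu | hu
  · calc 0 ≤ eiG (u - 1) := g_nonneg_of_nonpos (by linarith)
      _ < eiG u := g_strictMono (by linarith)
  · have := pdf_pos u
    have := cdf_nonneg u
    simp only [eiG]
    nlinarith

lemma k_nonneg_of_nonneg {u : ℝ} (hu : 0 ≤ u) : 0 ≤ eiG u - u := by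
  have := mills_pos hu
  simp only [eiG]
  nlinarith

lemma g_gt_max (u : ℝ) : max u 0 < eiG u := by
  rcases le_or_gt u 0 with hu | hu
  · rw [max_eq_right hu]; exact g_pos u
  · rw [max_eq_left hu.le]
    have h1 : eiG (u + 1) - (u + 1) < eiG u - u := k_strictAnti (by linarith)
    have h2 : 0 ≤ eiG (u + 1) - (u + 1) := k_nonneg_of_nonneg (by linarith)
    linarith

lemma g_zero : eiG 0 = stdGaussPdf' 0 := by simp [eiG]

lemma g_le_max_add (u : ℝ) : eiG u ≤ max u 0 + stdGaussPdf' 0 := by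
  rcases le_or_gt u 0 with hu | hu
  · rw [max_eq_right hu]
    have := g_monotone hu
    rw [g_zero] at this
    linarith
  · rw [max_eq_left hu.le]
    have h1 : eiG u - u ≤ eiG 0 - 0 := (k_strictAnti.antitone) hu.le
    rw [g_zero] at h1
    linarith

lemma eiGamma_of_pos {z s : ℝ} (hs : 0 < s) :
    eiGamma z s = Real.sqrt s * eiG (z / Real.sqrt s) := by
  have h : Real.sqrt s ≠ 0 := by positivity
  rw [eiGamma, if_neg hs.ne', eiG]
  field_simp

lemma max_div (z : ℝ) {c : ℝ} (hc : 0 < c) : max z 0 = c * max (z / c) 0 := by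
  rw [mul_max_of_nonneg _ _ hc.le, mul_div_cancel₀ _ hc.ne', mul_zero]

lemma eiGamma_bounds {z s : ℝ} (hs : 0 ≤ s) :
    max z 0 ≤ eiGamma z s ∧ eiGamma z s ≤ max z 0 + Real.sqrt s * stdGaussPdf' 0 := by
  rcases eq_or_lt_of_le hs with rfl | hs'
  · simp [eiGamma]
  · have hsq : (0:ℝ) < Real.sqrt s := Real.sqrt_pos.2 hs'
    rw [eiGamma_of_pos hs', max_div z hsq]
    constructor
    · exact mul_le_mul_of_nonneg_left (g_gt_max _).le hsq.le
    · have := g_le_max_add (z / Real.sqrt s)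
      nlinarith

lemma h_hasDeriv (z : ℝ) {r : ℝ} (hr : 0 < r) :
    HasDerivAt (fun r => r * eiG (z / r)) (stdGaussPdf' (z / r)) r := by
  have hinner : HasDerivAt (fun r : ℝ => z / r) (-(z / r ^ 2)) r := by
    have := (hasDerivAt_inv hr.ne').const_mul z
    refine (this.congr_deriv (by field_simp)).congr_of_eventuallyEq ?_
    exact Filter.Eventually.of_forall fun x => by simp [div_eq_mul_inv]
  have hcomp := (g_hasDeriv (z / r)).comp r hinner
  have := (hasDerivAt_id r).mul hcomp
  exact this.congr_deriv (by simp only [eiG, id, Function.comp]; field_simp; ring)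

lemma h_strictMonoOn (z : ℝ) : StrictMonoOn (fun r => r * eiG (z / r)) (Ioi 0) := by
  refine strictMonoOn_of_deriv_pos (convex_Ioi 0) ?_ ?_
  · intro r hr
    exact (h_hasDeriv z hr).continuousAt.continuousWithinAt
  · intro r hr
    rw [interior_Ioi] at hr
    rw [(h_hasDeriv z hr).deriv]
    exact pdf_pos _


end Aux

open Real Set in
/-- `γ` is continuous on `ℝ × [0,∞)`, positive whenever `s > 0`, and
non-decreasing in each argument. -/
theorem stmt11 :
    ContinuousOn (fun p : ℝ × ℝ => eiGamma p.1 p.2) (Set.univ ×ˢ Set.Ici 0) ∧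
    (∀ z s : ℝ, 0 < s → 0 < eiGamma z s) ∧
    (∀ s : ℝ, 0 ≤ s → Monotone fun z => eiGamma z s) ∧
    (∀ z : ℝ, MonotoneOn (eiGamma z) (Set.Ici 0)) := by
  refine ⟨?_, ?_, ?_, ?_⟩
  · -- continuity
    intro p hp
    have hp2 : (0:ℝ) ≤ p.2 := hp.2
    rcases eq_or_lt_of_le hp2 with h0 | h0
    · -- boundary case p.2 = 0
      have h0 : p.2 = 0 := h0.symm
      have hmax : Filter.Tendsto (fun q : ℝ × ℝ => max q.1 0)
          (nhdsWithin p (Set.univ ×ˢ Set.Ici 0)) (nhds (max p.1 0)) :=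
        ((continuous_fst.max continuous_const).tendsto p).mono_left nhdsWithin_le_nhds
      have hsq0 : Filter.Tendsto (fun q : ℝ × ℝ => Real.sqrt q.2 * stdGaussPdf' 0)
          (nhdsWithin p (Set.univ ×ˢ Set.Ici 0)) (nhds 0) := by
        have hc : Continuous (fun q : ℝ × ℝ => Real.sqrt q.2 * stdGaussPdf' 0) :=
          (Real.continuous_sqrt.comp continuous_snd).mul continuous_const
        have := (hc.tendsto p).mono_left
          (nhdsWithin_le_nhds (s := (Set.univ ×ˢ Set.Ici 0)))
        simpa [h0] using this
      have herr : Filter.Tendsto (fun q : ℝ × ℝ => eiGamma q.1 q.2 - max q.1 0)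
          (nhdsWithin p (Set.univ ×ˢ Set.Ici 0)) (nhds 0) := by
        refine squeeze_zero' ?_ ?_ hsq0
        · filter_upwards [self_mem_nhdsWithin] with q hq
          have := (eiGamma_bounds (z := q.1) (hq.2 : (0:ℝ) ≤ q.2)).1
          linarith
        · filter_upwards [self_mem_nhdsWithin] with q hq
          have := (eiGamma_bounds (z := q.1) (hq.2 : (0:ℝ) ≤ q.2)).2
          linarith
      have := hmax.add herr
      simp only [add_zero] at this
      have heq : (fun q : ℝ × ℝ => max q.1 0 + (eiGamma q.1 q.2 - max q.1 0))
          = fun q : ℝ × ℝ => eiGamma q.1 q.2 := by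
        funext q; ring
      rw [heq] at this
      have hval : eiGamma p.1 p.2 = max p.1 0 := by rw [h0]; simp [eiGamma]
      show Filter.Tendsto _ _ (nhds (eiGamma p.1 p.2))
      rw [hval]
      exact this
    · -- interior case 0 < p.2
      refine ContinuousAt.continuousWithinAt ?_
      have hopen : IsOpen {q : ℝ × ℝ | 0 < q.2} := isOpen_lt continuous_const continuous_snd
      have hF : ContinuousAt (fun q : ℝ × ℝ => Real.sqrt q.2 * eiG (q.1 / Real.sqrt q.2)) p := by
        have hsq : ContinuousAt (fun q : ℝ × ℝ => Real.sqrt q.2) p :=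
          (Real.continuous_sqrt.comp continuous_snd).continuousAt
        have hne : Real.sqrt p.2 ≠ 0 := by positivity
        exact hsq.mul (g_continuous.continuousAt.comp
          (continuous_fst.continuousAt.div hsq hne))
      refine hF.congr ?_
      filter_upwards [hopen.mem_nhds h0] with q hq
      exact (eiGamma_of_pos hq).symm
  · -- positivity
    intro z s hs
    rw [eiGamma_of_pos hs]
    have := g_pos (z / Real.sqrt s)
    have hsq : 0 < Real.sqrt s := Real.sqrt_pos.2 hs
    positivity
  · -- monotone in z
    intro s hs a b hab
    rcases eq_or_lt_of_le hs with rfl | hs'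
    · simp only [eiGamma, if_pos rfl]
      exact max_le_max hab le_rfl
    · simp only
      rw [eiGamma_of_pos hs', eiGamma_of_pos hs']
      refine mul_le_mul_of_nonneg_left (g_monotone ?_) (Real.sqrt_nonneg s)
      have hsq : 0 < Real.sqrt s := Real.sqrt_pos.2 hs'
      gcongr
  · -- monotone in s
    intro z a ha b hb hab
    rcases eq_or_lt_of_le (Set.mem_Ici.mp ha) with rfl | ha'
    · have : eiGamma z 0 = max z 0 := by simp [eiGamma]
      rw [this]
      exact (eiGamma_bounds (hb : (0:ℝ) ≤ b)).1
    · have hb' : 0 < b := lt_of_lt_of_le ha' hab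
      rw [eiGamma_of_pos ha', eiGamma_of_pos hb']
      exact (h_strictMonoOn z).monotoneOn (Real.sqrt_pos.2 ha') (Real.sqrt_pos.2 hb')
        (Real.sqrt_le_sqrt hab)
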